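/- Define ω : 𝒬 → ℝ on the space 𝒬 of real symmetric traceless 3×3 matrices by ω(B) = ln ∫_{𝕊²} exp(m·Bm) dσ(m). Then ω is convex on 𝒬. Moreover, for every Q ∈ 𝒬_phy, letting B_Q be a symmetric traceless matrix with ∫_{𝕊²} (m mᵀ − I/3) f_{B_Q}(m) dσ(m) = Q, one has B_Q : Q − ω(B_Q) = sup_{B ∈ 𝒬} (B : Q − ω(B)), i.e. the Legendre transform of ω at Q is attained at B = B_Q. (Here B : Q = Σ_{i,j} B_{ij} Q_{ij}.) -/

import Mathlib

open MeasureTheory Real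
open Metric
open scoped ENNReal

noncomputable section

abbrev E3 : Type := EuclideanSpace ℝ (Fin 3)
abbrev S2 : Type := Metric.sphere (0 : E3) 1
abbrev Mat3 : Type := Matrix (Fin 3) (Fin 3) ℝ

/-- The standard (rotation-invariant) surface measure on 𝕊², of total mass 4π. -/
noncomputable def sigma3 : Measure S2 := (volume : Measure E3).toSphere

/-- The quadratic form `m · B m` for `m ∈ 𝕊²`. -/
noncomputable def quadForm (B : Mat3) (m : S2) : ℝ :=
  ∑ i, ∑ j, (m : E3) i * B i j * (m : E3) j

/-- The Bingham partition function `Z_B = ∫ exp(m·Bm) dσ(m)`. -/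
noncomputable def ZB (B : Mat3) : ℝ := ∫ m : S2, Real.exp (quadForm B m) ∂sigma3

/-- The Bingham density `f_B(m) = exp(m·Bm)/Z_B`. -/
noncomputable def bingham (B : Mat3) (m : S2) : ℝ := Real.exp (quadForm B m) / ZB B

/-- The traceless second moment `∫ (m mᵀ − I/3) f dσ` of a density `f` on 𝕊². -/
noncomputable def secondMoment (f : S2 → ℝ) : Mat3 :=
  Matrix.of fun i j =>
    ∫ m : S2, ((m : E3) i * (m : E3) j - (if i = j then (1 : ℝ) / 3 else 0)) * f m ∂sigma3

/-- `Q ∈ 𝒬_phy`: symmetric, traceless, with all eigenvalues in `(−1/3, 2/3)`. -/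
def Qphy (Q : Mat3) : Prop :=
  Q.IsSymm ∧ Q.trace = 0 ∧ ∀ μ ∈ spectrum ℝ Q, -(1 / 3 : ℝ) < μ ∧ μ < 2 / 3

/-- `ω(B) = ln ∫ exp(m·Bm) dσ(m)`. -/
noncomputable def omegaFn (B : Mat3) : ℝ := Real.log (ZB B)

/-- The Frobenius pairing `B : Q = Σ B_{ij} Q_{ij}`. -/
noncomputable def frob (B Q : Mat3) : ℝ := ∑ i, ∑ j, B i j * Q i j

/-- `ω` is convex on the space 𝒬 of symmetric traceless matrices; and for `Q ∈ 𝒬_phy`,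
if `B_Q ∈ 𝒬` has `∫ (m mᵀ − I/3) f_{B_Q} dσ = Q` then
`B_Q : Q − ω(B_Q) = sup_{B ∈ 𝒬} (B : Q − ω(B))`, i.e. the Legendre transform of `ω` at
`Q` is attained at `B_Q`. -/

instance : IsFiniteMeasure sigma3 := by unfold sigma3; infer_instance

instance : NeZero sigma3 := by
  constructor
  intro h
  have h2 := Measure.toSphere_apply_univ (volume : Measure E3)
  rw [show (volume : Measure E3).toSphere = sigma3 from rfl, h] at h2
  simp at h2
  linarith [Real.pi_pos]

lemma cont_coord (i : Fin 3) : Continuous fun m : S2 => (m : E3) i := by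
  exact (continuous_apply i).comp ((PiLp.continuous_ofLp (p := 2) (β := fun _ : Fin 3 => ℝ)).comp continuous_subtype_val)

lemma cont_quadForm (B : Mat3) : Continuous (quadForm B) := by
  unfold quadForm
  exact continuous_finset_sum _ fun i _ => continuous_finset_sum _ fun j _ =>
    ((cont_coord i).mul continuous_const).mul (cont_coord j)

lemma integrable_cont {h : S2 → ℝ} (hc : Continuous h) : Integrable h sigma3 :=
  hc.integrable_of_hasCompactSupport (HasCompactSupport.of_compactSpace h)

lemma integrable_exp_qf (B : Mat3) : Integrable (fun m => Real.exp (quadForm B m)) sigma3 :=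
  integrable_cont (Real.continuous_exp.comp (cont_quadForm B))

lemma ZB_pos (B : Mat3) : 0 < ZB B := integral_exp_pos (integrable_exp_qf B)

lemma quadForm_smul_add (a b : ℝ) (A B : Mat3) (m : S2) :
    quadForm (a • A + b • B) m = a * quadForm A m + b * quadForm B m := by
  simp only [quadForm, Finset.mul_sum, ← Finset.sum_add_distrib]
  refine Finset.sum_congr rfl fun i _ => Finset.sum_congr rfl fun j _ => ?_
  simp [Matrix.add_apply, Matrix.smul_apply, smul_eq_mul]; ring

lemma quadForm_sub (A B : Mat3) (m : S2) :
    quadForm (A - B) m = quadForm A m - quadForm B m := by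
  simp only [quadForm, ← Finset.sum_sub_distrib]
  refine Finset.sum_congr rfl fun i _ => Finset.sum_congr rfl fun j _ => ?_
  simp [Matrix.sub_apply]; ring

lemma omega_cvx_ineq (A B : Mat3) (a b : ℝ) (ha : 0 ≤ a) (hb : 0 ≤ b) (hab : a + b = 1) :
    omegaFn (a • A + b • B) ≤ a * omegaFn A + b * omegaFn B := by
  rcases eq_or_lt_of_le ha with rfl | hapos
  · have hb1 : b = 1 := by linarith
    simp only [hb1, zero_smul, one_smul, zero_add, zero_mul, one_mul, le_refl]
  rcases eq_or_lt_of_le hb with rfl | hbpos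
  · have ha1 : a = 1 := by linarith
    simp only [ha1, zero_smul, one_smul, add_zero, zero_mul, one_mul, le_refl]
  set ZA := ZB A with hZA
  set ZBb := ZB B with hZBb
  have hZApos := ZB_pos A
  have hZBpos := ZB_pos B
  -- pointwise bound
  have hpt : ∀ m : S2, Real.exp (quadForm (a • A + b • B) m) ≤
      ZA ^ a * ZBb ^ b * (a * (Real.exp (quadForm A m) / ZA) + b * (Real.exp (quadForm B m) / ZBb)) := by
    intro m
    have h1 : Real.exp (quadForm (a • A + b • B) m)
        = (Real.exp (quadForm A m) / ZA) ^ a * (Real.exp (quadForm B m) / ZBb) ^ b * (ZA ^ a * ZBb ^ b) := by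
      rw [Real.div_rpow (Real.exp_nonneg _) hZApos.le, Real.div_rpow (Real.exp_nonneg _) hZBpos.le,
        quadForm_smul_add]
      rw [Real.exp_add, mul_comm a _, mul_comm b _, Real.exp_mul, Real.exp_mul]
      field_simp
      rfl
    rw [h1]
    have h2 := Real.geom_mean_le_arith_mean2_weighted
      (p₁ := Real.exp (quadForm A m) / ZA) (p₂ := Real.exp (quadForm B m) / ZBb)
      hapos.le hbpos.le (div_nonneg (Real.exp_nonneg _) hZApos.le) (div_nonneg (Real.exp_nonneg _) hZBpos.le) hab
    calc _ ≤ (a * (Real.exp (quadForm A m) / ZA) + b * (Real.exp (quadForm B m) / ZBb)) * (ZA ^ a * ZBb ^ b) :=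
          mul_le_mul_of_nonneg_right h2 (mul_nonneg (Real.rpow_nonneg hZApos.le a) (Real.rpow_nonneg hZBpos.le b))
      _ = _ := by ring
  have hint : ZB (a • A + b • B) ≤ ZA ^ a * ZBb ^ b := by
    have h3 : ZB (a • A + b • B) ≤ ∫ m : S2,
        ZA ^ a * ZBb ^ b * (a * (Real.exp (quadForm A m) / ZA) + b * (Real.exp (quadForm B m) / ZBb)) ∂sigma3 := by
      refine integral_mono (integrable_exp_qf _) ?_ hpt
      apply Integrable.const_mul
      exact (((integrable_exp_qf A).div_const ZA).const_mul a).add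
        (((integrable_exp_qf B).div_const ZBb).const_mul b)
    refine h3.trans_eq ?_
    rw [integral_const_mul]
    have : (∫ m : S2, (a * (Real.exp (quadForm A m) / ZA) + b * (Real.exp (quadForm B m) / ZBb)) ∂sigma3) = 1 := by
      rw [integral_add (((integrable_exp_qf A).div_const ZA).const_mul a)
        (((integrable_exp_qf B).div_const ZBb).const_mul b),
        integral_const_mul, integral_const_mul, integral_div, integral_div]
      rw [show (∫ m : S2, Real.exp (quadForm A m) ∂sigma3) = ZA from rfl,
        show (∫ m : S2, Real.exp (quadForm B m) ∂sigma3) = ZBb from rfl,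
        div_self hZApos.ne', div_self hZBpos.ne']
      linarith
    rw [this, mul_one]
  have := Real.log_le_log (ZB_pos _) hint
  rw [Real.log_mul (Real.rpow_pos_of_pos hZApos a).ne' (Real.rpow_pos_of_pos hZBpos b).ne', Real.log_rpow hZApos, Real.log_rpow hZBpos] at this
  exact this


lemma integrable_coord_mul (i j : Fin 3) (BQ : Mat3) :
    Integrable (fun m : S2 => (m : E3) i * (m : E3) j * Real.exp (quadForm BQ m)) sigma3 :=
  integrable_cont (((cont_coord i).mul (cont_coord j)).mul
    (Real.continuous_exp.comp (cont_quadForm BQ)))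

lemma entry_eq (BQ Q : Mat3) (hmom : secondMoment (bingham BQ) = Q) (i j : Fin 3) :
    ∫ m : S2, (m : E3) i * (m : E3) j * Real.exp (quadForm BQ m) ∂sigma3
      = (Q i j + (if i = j then (1 : ℝ) / 3 else 0)) * ZB BQ := by
  have hZ := ZB_pos BQ
  have h1 : Q i j = ∫ m : S2,
      ((m : E3) i * (m : E3) j - (if i = j then (1 : ℝ) / 3 else 0)) * bingham BQ m ∂sigma3 := by
    rw [← hmom]; rfl
  have h2 : ∀ m : S2, ((m : E3) i * (m : E3) j - (if i = j then (1 : ℝ) / 3 else 0)) * bingham BQ m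
      = ((m : E3) i * (m : E3) j * Real.exp (quadForm BQ m)
          - (if i = j then (1 : ℝ) / 3 else 0) * Real.exp (quadForm BQ m)) / ZB BQ := by
    intro m; unfold bingham; ring
  have h3 : Q i j = ((∫ m : S2, (m : E3) i * (m : E3) j * Real.exp (quadForm BQ m) ∂sigma3)
      - (if i = j then (1 : ℝ) / 3 else 0) * ZB BQ) / ZB BQ := by
    rw [h1, integral_congr_ae (Filter.Eventually.of_forall h2), integral_div,
      integral_sub (integrable_coord_mul i j BQ) ((integrable_exp_qf BQ).const_mul _),
      integral_const_mul]
    rfl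
  field_simp at h3
  split_ifs at h3 ⊢ <;> linear_combination -h3

lemma moment_eq (BQ Q D : Mat3) (hmom : secondMoment (bingham BQ) = Q) (htrD : D.trace = 0) :
    ∫ m : S2, quadForm D m * Real.exp (quadForm BQ m) ∂sigma3 = frob D Q * ZB BQ := by
  have hpt : ∀ m : S2, quadForm D m * Real.exp (quadForm BQ m)
      = ∑ i, ∑ j, D i j * ((m : E3) i * (m : E3) j * Real.exp (quadForm BQ m)) := by
    intro m
    unfold quadForm
    rw [Finset.sum_mul]
    refine Finset.sum_congr rfl fun i _ => ?_
    rw [Finset.sum_mul]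
    exact Finset.sum_congr rfl fun j _ => by ring
  rw [integral_congr_ae (Filter.Eventually.of_forall hpt)]
  rw [integral_finset_sum (f := fun i (m : S2) => ∑ j, D i j * ((m : E3) i * (m : E3) j
      * Real.exp (quadForm BQ m))) _ fun i _ => (integrable_finset_sum _ fun j _ =>
    ((integrable_coord_mul i j BQ).const_mul _))]
  have : ∀ i ∈ Finset.univ, (∫ m : S2, ∑ j, D i j * ((m : E3) i * (m : E3) j
      * Real.exp (quadForm BQ m)) ∂sigma3)
      = ∑ j, D i j * ((Q i j + (if i = j then (1:ℝ)/3 else 0)) * ZB BQ) := by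
    intro i _
    rw [integral_finset_sum _ fun j _ => ((integrable_coord_mul i j BQ).const_mul _)]
    refine Finset.sum_congr rfl fun j _ => ?_
    rw [integral_const_mul, entry_eq BQ Q hmom i j]
  rw [Finset.sum_congr rfl this]
  have htr : ∑ i, D i i = 0 := htrD
  have expand : ∀ i, ∑ j, D i j * ((Q i j + (if i = j then (1:ℝ)/3 else 0)) * ZB BQ)
      = (∑ j, D i j * Q i j) * ZB BQ + D i i * (1/3) * ZB BQ := by
    intro i
    have : ∀ j, D i j * ((Q i j + (if i = j then (1:ℝ)/3 else 0)) * ZB BQ)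
        = D i j * Q i j * ZB BQ + (if i = j then D i j * (1/3) * ZB BQ else 0) := by
      intro j; split_ifs <;> ring
    rw [Finset.sum_congr rfl fun j _ => this j, Finset.sum_add_distrib,
      Finset.sum_ite_eq Finset.univ i (fun j => D i j * (1/3) * ZB BQ), ← Finset.sum_mul]
    simp
  rw [Finset.sum_congr rfl fun i _ => expand i, Finset.sum_add_distrib, ← Finset.sum_mul, ← Finset.sum_mul,
    ← Finset.sum_mul]
  rw [htr]
  unfold frob
  ring

lemma frob_sub (A B Q : Mat3) : frob (A - B) Q = frob A Q - frob B Q := by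
  unfold frob
  rw [← Finset.sum_sub_distrib]
  refine Finset.sum_congr rfl fun i _ => ?_
  rw [← Finset.sum_sub_distrib]
  refine Finset.sum_congr rfl fun j _ => ?_
  simp [Matrix.sub_apply]; ring

lemma key_ineq (B BQ Q : Mat3) (htrB : B.trace = 0) (htrBQ : BQ.trace = 0)
    (hmom : secondMoment (bingham BQ) = Q) :
    frob B Q - omegaFn B ≤ frob BQ Q - omegaFn BQ := by
  set D := B - BQ with hD
  have htrD : D.trace = 0 := by rw [hD, Matrix.trace_sub, htrB, htrBQ, sub_zero]
  set c := frob D Q with hc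
  have hZ := ZB_pos BQ
  have hmm := moment_eq BQ Q D hmom htrD
  have hpt : ∀ m : S2, Real.exp c * ((quadForm D m - c + 1) * Real.exp (quadForm BQ m))
      ≤ Real.exp (quadForm B m) := by
    intro m
    have h1 : quadForm D m - c + 1 ≤ Real.exp (quadForm D m - c) := by
      have := Real.add_one_le_exp (quadForm D m - c); linarith
    have h2 : Real.exp c * ((quadForm D m - c + 1) * Real.exp (quadForm BQ m))
        ≤ Real.exp c * (Real.exp (quadForm D m - c) * Real.exp (quadForm BQ m)) := by
      have := mul_le_mul_of_nonneg_right h1 (Real.exp_nonneg (quadForm BQ m))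
      exact mul_le_mul_of_nonneg_left this (Real.exp_nonneg c)
    refine h2.trans_eq ?_
    rw [← Real.exp_add, ← Real.exp_add, quadForm_sub]
    ring_nf
  have hint : Real.exp c * ZB BQ ≤ ZB B := by
    have hI1 : Integrable (fun m : S2 => quadForm D m * Real.exp (quadForm BQ m)) sigma3 :=
      integrable_cont ((cont_quadForm D).mul (Real.continuous_exp.comp (cont_quadForm BQ)))
    have hI2 : Integrable (fun m : S2 =>
        Real.exp c * ((quadForm D m - c + 1) * Real.exp (quadForm BQ m))) sigma3 := by
      apply Integrable.const_mul
      have : (fun m : S2 => (quadForm D m - c + 1) * Real.exp (quadForm BQ m))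
          = fun m : S2 => quadForm D m * Real.exp (quadForm BQ m)
            + (1 - c) * Real.exp (quadForm BQ m) := by
        funext m; ring
      rw [this]
      exact hI1.add ((integrable_exp_qf BQ).const_mul _)
    have hle := integral_mono hI2 (integrable_exp_qf B) hpt
    have heq : ∫ m : S2, Real.exp c * ((quadForm D m - c + 1) * Real.exp (quadForm BQ m)) ∂sigma3
        = Real.exp c * ZB BQ := by
      rw [integral_const_mul]
      have : (fun m : S2 => (quadForm D m - c + 1) * Real.exp (quadForm BQ m))
          = fun m : S2 => quadForm D m * Real.exp (quadForm BQ m)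
            + (1 - c) * Real.exp (quadForm BQ m) := by
        funext m; ring
      rw [this, integral_add hI1 ((integrable_exp_qf BQ).const_mul _), integral_const_mul, hmm]
      rw [show (∫ m : S2, Real.exp (quadForm BQ m) ∂sigma3) = ZB BQ from rfl]
      ring
    rw [heq] at hle
    exact hle
  have hlog := Real.log_le_log (mul_pos (Real.exp_pos c) hZ) hint
  rw [Real.log_mul (Real.exp_pos c).ne' hZ.ne', Real.log_exp] at hlog
  have hfrob : c = frob B Q - frob BQ Q := by rw [hc, hD, frob_sub]
  unfold omegaFn
  rw [hfrob] at hlog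
  linarith

theorem stmt13 :
    ConvexOn ℝ {B : Mat3 | B.IsSymm ∧ B.trace = 0} omegaFn ∧
    ∀ Q : Mat3, Qphy Q →
      ∀ BQ : Mat3, BQ.IsSymm → BQ.trace = 0 → secondMoment (bingham BQ) = Q →
        IsGreatest {x : ℝ | ∃ B : Mat3, B.IsSymm ∧ B.trace = 0 ∧ x = frob B Q - omegaFn B}
          (frob BQ Q - omegaFn BQ) := by
  constructor
  · constructor
    · intro x hx y hy a b ha hb hab
      exact ⟨(hx.1.smul a).add (hy.1.smul b), by
        rw [Matrix.trace_add, Matrix.trace_smul, Matrix.trace_smul, hx.2, hy.2]; simp⟩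
    · intro x _ y _ a b ha hb hab
      simpa using omega_cvx_ineq x y a b ha hb hab
  · intro Q _ BQ hsym htr hmom
    constructor
    · exact ⟨BQ, hsym, htr, rfl⟩
    · rintro x ⟨B, hBsym, hBtr, rfl⟩
      exact key_ineq B BQ Q hBtr htr hmom
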